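/- The only isoparametric surfaces in ℝ³ (surfaces with both principal curvatures constant) that satisfy the α-stationary equation H = α⟨N, p⟩/|p|² are: planes through the origin (any α), spheres centered at the origin (α = -2), and spheres through the origin (α = -4). In particular, no circular cylinder is α-stationary for any α. -/

import Mathlib

open scoped RealInnerProductSpace

local notation "E" => EuclideanSpace ℝ (Fin 3)

lemma quad_sum {b c K t s : ℝ} (h : t ≠ s) (ht : t^2 + 2*b*t + c = K)
    (hs : s^2 + 2*b*s + c = K) : t + s = -(2*b) := by
  have h1 : (t - s) * (t + s + 2*b) = 0 := by nlinarith
  rcases mul_eq_zero.1 h1 with h2 | h2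
  · exact absurd (sub_eq_zero.1 h2) h
  · linarith

lemma quad_three {b c K t₁ t₂ t₃ : ℝ} (h12 : t₁ ≠ t₂) (h23 : t₂ ≠ t₃) (h13 : t₁ ≠ t₃)
    (e1 : t₁^2 + 2*b*t₁ + c = K) (e2 : t₂^2 + 2*b*t₂ + c = K)
    (e3 : t₃^2 + 2*b*t₃ + c = K) : False := by
  have a1 := quad_sum h12 e1 e2
  have a2 := quad_sum h23 e2 e3
  exact h13 (by linarith)

lemma exists_unit_orth (u : E) (hu : ‖u‖ = 1) : ∃ v : E, ‖v‖ = 1 ∧ ⟪v, u⟫ = 0 := by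
  have hu0 : u ≠ 0 := by intro h; simp [h] at hu
  haveI : Fact (Module.finrank ℝ E = 2 + 1) := ⟨by simp⟩
  have hf : Module.finrank ℝ ((ℝ ∙ u)ᗮ) = 2 := Submodule.finrank_orthogonal_span_singleton hu0
  have hne : ((ℝ ∙ u)ᗮ : Submodule ℝ E) ≠ ⊥ := by
    intro h
    rw [h] at hf
    simp at hf
  obtain ⟨w, hw, hw0⟩ := Submodule.exists_mem_ne_zero_of_ne_bot hne
  refine ⟨‖w‖⁻¹ • w, ?_, ?_⟩
  · simp [norm_smul, norm_ne_zero_iff.2 hw0]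
  · have hwu : ⟪w, u⟫ = 0 := by
      have := (Submodule.mem_orthogonal _ w).1 hw u (Submodule.mem_span_singleton_self u)
      rwa [real_inner_comm] at this
    rw [real_inner_smul_left, hwu, mul_zero]


/-- The only isoparametric surfaces of ℝ³ (planes, round spheres and circular
cylinders, taking this classification for granted) satisfying the α-stationary
equation H = α⟪N, p⟫/|p|² (α ≠ 0) at all their points p ≠ 0 are: planes through
the origin, spheres centered at the origin (α = -2) and spheres through the
origin (α = -4).  In particular no circular cylinder is α-stationary. -/
theorem isoparametric_stationary_classification (α : ℝ) (hα : α ≠ 0) :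
    -- planes: unit normal n, signed distance d, mean curvature 0
    (∀ (n : E) (d : ℝ), ‖n‖ = 1 →
      (∀ p : E, ⟪p, n⟫ = d → p ≠ 0 → (0 : ℝ) = α * ⟪n, p⟫ / ‖p‖ ^ 2) →
      d = 0) ∧
    -- spheres: center c, radius r, inward normal (c-p)/r, mean curvature 2/r
    (∀ (c : E) (r : ℝ), 0 < r →
      (∀ p : E, ‖p - c‖ = r → p ≠ 0 →
        2 / r = α * ⟪(1 / r) • (c - p), p⟫ / ‖p‖ ^ 2) →
      (c = 0 ∧ α = -2) ∨ (‖c‖ = r ∧ α = -4)) ∧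
    -- circular cylinders of radius r about the line {a + t u}: inward normal
    -- -(p - a - ⟪p - a, u⟫ u)/r, mean curvature 1/r; never stationary
    (∀ (a u : E) (r : ℝ), ‖u‖ = 1 → 0 < r →
      ¬ (∀ p : E, ‖p - a - ⟪p - a, u⟫ • u‖ = r → p ≠ 0 →
        1 / r = α * ⟪(-(1 / r)) • (p - a - ⟪p - a, u⟫ • u), p⟫ / ‖p‖ ^ 2)) := by
  refine ⟨?_, ?_, ?_⟩
  intro n d hn h
  by_contra hd
  have hn0 : n ≠ 0 := by intro h'; simp [h'] at hn
  have hp0 : (d • n : E) ≠ 0 := smul_ne_zero hd hn0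
  have hp : ⟪(d • n : E), n⟫ = d := by
    rw [real_inner_smul_left, real_inner_self_eq_norm_sq, hn]; ring
  have h1 := h (d • n) hp hp0
  rw [real_inner_smul_right, real_inner_self_eq_norm_sq, hn] at h1
  have hns : ‖(d • n : E)‖ ^ 2 ≠ 0 := pow_ne_zero _ (norm_ne_zero_iff.2 hp0)
  rw [eq_comm, div_eq_zero_iff] at h1
  rcases h1 with h1 | h1
  · rcases mul_eq_zero.1 h1 with h2 | h2
    · exact hα h2
    · exact hd (by nlinarith)
  · exact hns h1
  intro c r hr h
  have hr0 : r ≠ 0 := ne_of_gt hr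
  have key : ∀ p : E, ‖p - c‖ = r → p ≠ 0 →
      (4 + α) * ‖p‖ ^ 2 = α * (‖c‖ ^ 2 - r ^ 2) := by
    intro p hp hp0
    have h1 := h p hp hp0
    have hps : (0:ℝ) < ‖p‖ ^ 2 := pow_pos (norm_pos_iff.2 hp0) 2
    set X : ℝ := ⟪c, p⟫ with hX
    have hin : ⟪(1/r) • (c - p), p⟫ = (1/r) * (X - ‖p‖ ^ 2) := by
      rw [real_inner_smul_left, inner_sub_left, real_inner_self_eq_norm_sq, hX]
    have hcp : ‖p‖ ^ 2 - 2 * X + ‖c‖ ^ 2 = r ^ 2 := by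
      have h2 : ‖p - c‖ ^ 2 = r ^ 2 := by rw [hp]
      rw [norm_sub_sq_real, real_inner_comm] at h2
      rw [hX]; linarith
    rw [hin] at h1
    field_simp at h1
    have h2 : 2 * ‖p‖ ^ 2 = α * (X - ‖p‖ ^ 2) :=
      by linear_combination h1
    linear_combination 2 * h2 - α * hcp
  by_cases hc : c = 0
  · left
    refine ⟨hc, ?_⟩
    set p : E := r • (EuclideanSpace.single (0 : Fin 3) (1:ℝ)) with hpdef
    have hp1 : ‖p‖ = r := by
      rw [hpdef, norm_smul, EuclideanSpace.norm_single]
      simp [abs_of_pos hr]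
    have hp0 : p ≠ 0 := by
      intro h'
      rw [h'] at hp1; simp at hp1; exact hr0 hp1.symm
    have hk := key p (by rw [hc, sub_zero, hp1]) hp0
    rw [hp1, hc] at hk
    simp at hk
    have h2 : (4 + 2*α) * r ^ 2 = 0 := by linear_combination hk
    rcases mul_eq_zero.1 h2 with h' | h'
    · linarith
    · exact absurd h' (by positivity)
  · right
    have hc' : (0:ℝ) < ‖c‖ := norm_pos_iff.2 hc
    set t : ℝ := r / ‖c‖ with htdef
    have ht : 0 < t := div_pos hr hc'
    have hsub1 : ((1 + t) • c : E) - c = t • c := by module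
    have hn1 : ‖((1 + t) • c : E) - c‖ = r := by
      rw [hsub1, norm_smul, Real.norm_eq_abs, abs_of_pos ht, htdef]
      field_simp
    have hnp1 : ‖((1 + t) • c : E)‖ = ‖c‖ + r := by
      rw [norm_smul, Real.norm_eq_abs, abs_of_pos (by linarith : (0:ℝ) < 1 + t), htdef]
      field_simp
    have hp10 : ((1 + t) • c : E) ≠ 0 := by
      intro h'
      rw [h'] at hnp1; simp at hnp1; linarith
    have hk1 := key _ hn1 hp10
    rw [hnp1] at hk1
    by_cases hcr : ‖c‖ = r
    · refine ⟨hcr, ?_⟩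
      rw [hcr] at hk1
      have h2 : (4 + α) * (4 * r ^ 2) = 0 := by linear_combination hk1
      rcases mul_eq_zero.1 h2 with h' | h'
      · linarith
      · exact absurd h' (by positivity)
    · exfalso
      have hsub2 : ((1 - t) • c : E) - c = (-t) • c := by module
      have hn2 : ‖((1 - t) • c : E) - c‖ = r := by
        rw [hsub2, norm_smul, Real.norm_eq_abs, abs_neg, abs_of_pos ht, htdef]
        field_simp
      have hnp2 : ‖((1 - t) • c : E)‖ ^ 2 = (‖c‖ - r) ^ 2 := by
        rw [norm_smul, Real.norm_eq_abs, mul_pow, sq_abs, htdef]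
        field_simp
      have hp20 : ((1 - t) • c : E) ≠ 0 := by
        intro h'
        rw [h'] at hnp2
        simp only [norm_zero] at hnp2
        have h2 : (‖c‖ - r) ^ 2 = 0 := by simpa using hnp2.symm
        exact hcr (by nlinarith)
      have hk2 := key _ hn2 hp20
      rw [hnp2] at hk2
      have h4 : (4 + α) * (4 * ‖c‖ * r) = 0 := by linear_combination hk1 - hk2
      have hα4 : α = -4 := by
        rcases mul_eq_zero.1 h4 with h' | h'
        · linarith
        · exact absurd h' (by positivity)
      rw [hα4] at hk1
      have h5 : (‖c‖ - r) * (‖c‖ + r) = 0 := by linear_combination ((1:ℝ)/4) * hk1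
      rcases mul_eq_zero.1 h5 with h' | h'
      · exact hcr (by linarith)
      · linarith
  intro a u r hu hr h
  have hr0 : r ≠ 0 := ne_of_gt hr
  have hu0 : u ≠ 0 := by intro h'; simp [h'] at hu
  obtain ⟨v, hv, hvu⟩ := exists_unit_orth u hu
  have huu : ⟪u, u⟫ = (1:ℝ) := by rw [real_inner_self_eq_norm_sq, hu]; norm_num
  have hvv : ⟪v, v⟫ = (1:ℝ) := by rw [real_inner_self_eq_norm_sq, hv]; norm_num
  set f : ℝ → E := fun t => a + t • u + r • v with hf
  set b : ℝ := ⟪a + r • v, u⟫ with hb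
  set c0 : ℝ := ‖a + r • v‖ ^ 2 with hc0
  set Y : ℝ := ⟪v, a⟫ with hY
  set K : ℝ := -α * r * (Y + r) with hK
  have key : ∀ t : ℝ, f t ≠ 0 → t ^ 2 + 2 * b * t + c0 = K := by
    intro t ht
    have hsub : f t - a = t • u + r • v := by simp only [hf]; abel
    have hip : ⟪f t - a, u⟫ = t := by
      rw [hsub, inner_add_left, real_inner_smul_left, real_inner_smul_left, huu, hvu]
      ring
    have hproj : f t - a - ⟪f t - a, u⟫ • u = r • v := by
      rw [hip, hsub]; abel
    have hnorm : ‖f t - a - ⟪f t - a, u⟫ • u‖ = r := by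
      rw [hproj, norm_smul, Real.norm_eq_abs, abs_of_pos hr, hv, mul_one]
    have h1 := h (f t) hnorm ht
    rw [hproj] at h1
    have hvf : ⟪v, f t⟫ = Y + r := by
      simp only [hf]
      rw [inner_add_right, inner_add_right, real_inner_smul_right,
        real_inner_smul_right, hvu, hvv, ← hY]
      ring
    have hinner : ⟪(-(1 / r)) • (r • v), f t⟫ = -(Y + r) := by
      rw [real_inner_smul_left, real_inner_smul_left, hvf]
      field_simp
    rw [hinner] at h1
    -- h1 : 1 / r = α * -(⟪v,a⟫ + r) / ‖f t‖ ^ 2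
    have hft : (0:ℝ) < ‖f t‖ ^ 2 := pow_pos (norm_pos_iff.2 ht) 2
    have h2 : ‖f t‖ ^ 2 = -α * r * (Y + r) := by
      field_simp at h1
      linear_combination h1
    have h3 : ‖f t‖ ^ 2 = t ^ 2 + 2 * b * t + c0 := by
      have hft2 : f t = (a + r • v) + t • u := by simp only [hf]; abel
      rw [hft2, norm_add_sq_real, norm_smul, Real.norm_eq_abs, hu, real_inner_smul_right,
        ← hb, ← hc0, mul_one, sq_abs]
      ring
    rw [h3] at h2
    rw [h2, hK]
  have hinj : ∀ t s : ℝ, f t = 0 → f s = 0 → t = s := by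
    intro t s h1 h2
    have h3 : (t - s) • u = 0 := by
      have : f t - f s = (t - s) • u := by simp only [hf, sub_smul]; abel
      rw [h1, h2, sub_zero] at this
      exact this.symm
    rcases smul_eq_zero.1 h3 with h' | h'
    · linarith [sub_eq_zero.1 (by exact_mod_cast h')]
    · exact absurd h' hu0
  have pick : ∃ t₁ t₂ t₃ : ℝ, t₁ ≠ t₂ ∧ t₂ ≠ t₃ ∧ t₁ ≠ t₃ ∧
      f t₁ ≠ 0 ∧ f t₂ ≠ 0 ∧ f t₃ ≠ 0 := by
    by_cases h0 : f 0 = 0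
    · refine ⟨1, 2, 3, by norm_num, by norm_num, by norm_num, ?_, ?_, ?_⟩ <;>
        · intro h'
          have := hinj _ _ h' h0
          norm_num at this
    · by_cases h1 : f 1 = 0
      · refine ⟨0, 2, 3, by norm_num, by norm_num, by norm_num, h0, ?_, ?_⟩ <;>
          · intro h'
            have := hinj _ _ h' h1
            norm_num at this
      · by_cases h2 : f 2 = 0
        · refine ⟨0, 1, 3, by norm_num, by norm_num, by norm_num, h0, h1, ?_⟩
          intro h'
          have := hinj _ _ h' h2
          norm_num at this
        · exact ⟨0, 1, 2, by norm_num, by norm_num, by norm_num, h0, h1, h2⟩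
  obtain ⟨t₁, t₂, t₃, h12, h23, h13, g1, g2, g3⟩ := pick
  exact quad_three h12 h23 h13 (key t₁ g1) (key t₂ g2) (key t₃ g3)
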